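/- arXiv:2303.15476 — 5 statements merged into one kernel-verified Lean document; each statement's English description precedes it below -/
import Mathlib

section
/- There exists an edge-coloring of the complete graph K_13 with 6 colors such that every vertex is incident to exactly 2 edges of each color and no copy of K_4 has all six edges colored with distinct colors. -/
def K13c : Fin 13 → Fin 13 → Fin 6 :=
  ![![0,0,0,1,3,2,1,3,4,2,5,5,4],
    ![0,0,3,1,5,5,3,4,2,0,4,2,1],
    ![0,3,0,3,4,0,1,5,1,5,2,4,2],
    ![1,1,3,0,5,4,4,0,5,2,2,0,3],
    ![3,5,4,5,0,1,0,2,2,0,3,1,4],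
    ![2,5,0,4,1,0,2,0,3,5,3,4,1],
    ![1,3,1,4,0,2,0,5,3,4,0,2,5],
    ![3,4,5,0,2,0,5,0,4,1,1,3,2],
    ![4,2,1,5,2,3,3,4,0,1,0,5,0],
    ![2,0,5,2,0,5,4,1,1,0,4,3,3],
    ![5,4,2,2,3,3,0,1,0,4,0,1,5],
    ![5,2,4,0,1,4,2,3,5,3,1,0,0],
    ![4,1,2,3,4,1,5,2,0,3,5,0,0]]

lemma K13c_symm : ∀ i j, K13c i j = K13c j i := by decide

lemma K13c_balanced : ∀ v : Fin 13, ∀ col : Fin 6,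
    (Finset.univ.filter (fun j => j ≠ v ∧ K13c v j = col)).card = 2 := by decide

lemma K13c_sorted : ∀ a b d e : Fin 13, a < b → b < d → d < e →
    ¬ ([K13c a b, K13c a d, K13c a e, K13c b d, K13c b e, K13c d e] : List (Fin 6)).Nodup := by
  decide

lemma K13c_no_rainbow : ∀ a b d e : Fin 13, a ≠ b → a ≠ d → a ≠ e → b ≠ d → b ≠ e → d ≠ e →
    ¬ ([K13c a b, K13c a d, K13c a e, K13c b d, K13c b e, K13c d e] : List (Fin 6)).Nodup := by
  have hsym := K13c_symm
  have H := K13c_sorted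
  intro a b d e hab had hae hbd hbe hde
  rcases lt_or_gt_of_ne hab with o1 | o1
  ·
    rcases lt_or_gt_of_ne hbd.symm with o2 | o2
    ·
      rcases lt_or_gt_of_ne had.symm with o3 | o3
      ·
        rcases lt_or_gt_of_ne hbe.symm with o4 | o4
        ·
          rcases lt_or_gt_of_ne hae.symm with o5 | o5
          ·
            rcases lt_or_gt_of_ne hde.symm with o6 | o6
            ·
              have H2 := H e d a b o6 o3 o1
              rw [hsym e d, hsym e a, hsym e b, hsym d a, hsym d b] at H2
              exact fun hn => H2 (((( by decide : List.Perm ([5,2,4,1,3,0] : List (Fin 6)) [0,1,2,3,4,5]) ).map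
                (![K13c a b, K13c a d, K13c a e, K13c b d, K13c b e, K13c d e] : Fin 6 → Fin 6)).nodup_iff.mpr hn)
            ·
              have H2 := H d e a b o6 o5 o1
              rw [hsym d a, hsym d b, hsym e a, hsym e b] at H2
              exact fun hn => H2 (((( by decide : List.Perm ([5,1,3,2,4,0] : List (Fin 6)) [0,1,2,3,4,5]) ).map
                (![K13c a b, K13c a d, K13c a e, K13c b d, K13c b e, K13c d e] : Fin 6 → Fin 6)).nodup_iff.mpr hn)
          ·
            have H2 := H d a e b o3 o5 o4
            rw [hsym d a, hsym d b, hsym e b] at H2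
            exact fun hn => H2 (((( by decide : List.Perm ([1,5,3,2,0,4] : List (Fin 6)) [0,1,2,3,4,5]) ).map
              (![K13c a b, K13c a d, K13c a e, K13c b d, K13c b e, K13c d e] : Fin 6 → Fin 6)).nodup_iff.mpr hn)
        ·
          have H2 := H d a b e o3 o1 o4
          rw [hsym d a, hsym d b] at H2
          exact fun hn => H2 (((( by decide : List.Perm ([1,3,5,0,2,4] : List (Fin 6)) [0,1,2,3,4,5]) ).map
            (![K13c a b, K13c a d, K13c a e, K13c b d, K13c b e, K13c d e] : Fin 6 → Fin 6)).nodup_iff.mpr hn)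
      ·
        rcases lt_or_gt_of_ne hbe.symm with o7 | o7
        ·
          rcases lt_or_gt_of_ne hde.symm with o8 | o8
          ·
            rcases lt_or_gt_of_ne hae.symm with o9 | o9
            ·
              have H2 := H e a d b o9 o3 o2
              rw [hsym e a, hsym e d, hsym e b, hsym d b] at H2
              exact fun hn => H2 (((( by decide : List.Perm ([2,5,4,1,0,3] : List (Fin 6)) [0,1,2,3,4,5]) ).map
                (![K13c a b, K13c a d, K13c a e, K13c b d, K13c b e, K13c d e] : Fin 6 → Fin 6)).nodup_iff.mpr hn)
            ·
              have H2 := H a e d b o9 o8 o2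
              rw [hsym e d, hsym e b, hsym d b] at H2
              exact fun hn => H2 (((( by decide : List.Perm ([2,1,0,5,4,3] : List (Fin 6)) [0,1,2,3,4,5]) ).map
                (![K13c a b, K13c a d, K13c a e, K13c b d, K13c b e, K13c d e] : Fin 6 → Fin 6)).nodup_iff.mpr hn)
          ·
            have H2 := H a d e b o3 o8 o7
            rw [hsym d b, hsym e b] at H2
            exact fun hn => H2 (((( by decide : List.Perm ([1,2,0,5,3,4] : List (Fin 6)) [0,1,2,3,4,5]) ).map
              (![K13c a b, K13c a d, K13c a e, K13c b d, K13c b e, K13c d e] : Fin 6 → Fin 6)).nodup_iff.mpr hn)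
        ·
          have H2 := H a d b e o3 o2 o7
          rw [hsym d b] at H2
          exact fun hn => H2 (((( by decide : List.Perm ([1,0,2,3,5,4] : List (Fin 6)) [0,1,2,3,4,5]) ).map
            (![K13c a b, K13c a d, K13c a e, K13c b d, K13c b e, K13c d e] : Fin 6 → Fin 6)).nodup_iff.mpr hn)
    ·
      rcases lt_or_gt_of_ne hde.symm with o10 | o10
      ·
        rcases lt_or_gt_of_ne hbe.symm with o11 | o11
        ·
          rcases lt_or_gt_of_ne hae.symm with o12 | o12
          ·
            have H2 := H e a b d o12 o1 o2
            rw [hsym e a, hsym e b, hsym e d] at H2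
            exact fun hn => H2 (((( by decide : List.Perm ([2,4,5,0,1,3] : List (Fin 6)) [0,1,2,3,4,5]) ).map
              (![K13c a b, K13c a d, K13c a e, K13c b d, K13c b e, K13c d e] : Fin 6 → Fin 6)).nodup_iff.mpr hn)
          ·
            have H2 := H a e b d o12 o11 o2
            rw [hsym e b, hsym e d] at H2
            exact fun hn => H2 (((( by decide : List.Perm ([2,0,1,4,5,3] : List (Fin 6)) [0,1,2,3,4,5]) ).map
              (![K13c a b, K13c a d, K13c a e, K13c b d, K13c b e, K13c d e] : Fin 6 → Fin 6)).nodup_iff.mpr hn)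
        ·
          have H2 := H a b e d o1 o11 o10
          rw [hsym e d] at H2
          exact fun hn => H2 (((( by decide : List.Perm ([0,2,1,4,3,5] : List (Fin 6)) [0,1,2,3,4,5]) ).map
            (![K13c a b, K13c a d, K13c a e, K13c b d, K13c b e, K13c d e] : Fin 6 → Fin 6)).nodup_iff.mpr hn)
      ·
        have H2 := H a b d e o1 o2 o10
        exact fun hn => H2 (((( by decide : List.Perm ([0,1,2,3,4,5] : List (Fin 6)) [0,1,2,3,4,5]) ).map
          (![K13c a b, K13c a d, K13c a e, K13c b d, K13c b e, K13c d e] : Fin 6 → Fin 6)).nodup_iff.mpr hn)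
  ·
    rcases lt_or_gt_of_ne had.symm with o13 | o13
    ·
      rcases lt_or_gt_of_ne hbd.symm with o14 | o14
      ·
        rcases lt_or_gt_of_ne hae.symm with o15 | o15
        ·
          rcases lt_or_gt_of_ne hbe.symm with o16 | o16
          ·
            rcases lt_or_gt_of_ne hde.symm with o17 | o17
            ·
              have H2 := H e d b a o17 o14 o1
              rw [hsym e d, hsym e b, hsym e a, hsym d b, hsym d a, hsym b a] at H2
              exact fun hn => H2 (((( by decide : List.Perm ([5,4,2,3,1,0] : List (Fin 6)) [0,1,2,3,4,5]) ).map
                (![K13c a b, K13c a d, K13c a e, K13c b d, K13c b e, K13c d e] : Fin 6 → Fin 6)).nodup_iff.mpr hn)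
            ·
              have H2 := H d e b a o17 o16 o1
              rw [hsym d b, hsym d a, hsym e b, hsym e a, hsym b a] at H2
              exact fun hn => H2 (((( by decide : List.Perm ([5,3,1,4,2,0] : List (Fin 6)) [0,1,2,3,4,5]) ).map
                (![K13c a b, K13c a d, K13c a e, K13c b d, K13c b e, K13c d e] : Fin 6 → Fin 6)).nodup_iff.mpr hn)
          ·
            have H2 := H d b e a o14 o16 o15
            rw [hsym d b, hsym d a, hsym b a, hsym e a] at H2
            exact fun hn => H2 (((( by decide : List.Perm ([3,5,1,4,0,2] : List (Fin 6)) [0,1,2,3,4,5]) ).map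
              (![K13c a b, K13c a d, K13c a e, K13c b d, K13c b e, K13c d e] : Fin 6 → Fin 6)).nodup_iff.mpr hn)
        ·
          have H2 := H d b a e o14 o1 o15
          rw [hsym d b, hsym d a, hsym b a] at H2
          exact fun hn => H2 (((( by decide : List.Perm ([3,1,5,0,4,2] : List (Fin 6)) [0,1,2,3,4,5]) ).map
            (![K13c a b, K13c a d, K13c a e, K13c b d, K13c b e, K13c d e] : Fin 6 → Fin 6)).nodup_iff.mpr hn)
      ·
        rcases lt_or_gt_of_ne hae.symm with o18 | o18
        ·
          rcases lt_or_gt_of_ne hde.symm with o19 | o19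
          ·
            rcases lt_or_gt_of_ne hbe.symm with o20 | o20
            ·
              have H2 := H e b d a o20 o14 o13
              rw [hsym e b, hsym e d, hsym e a, hsym b a, hsym d a] at H2
              exact fun hn => H2 (((( by decide : List.Perm ([4,5,2,3,0,1] : List (Fin 6)) [0,1,2,3,4,5]) ).map
                (![K13c a b, K13c a d, K13c a e, K13c b d, K13c b e, K13c d e] : Fin 6 → Fin 6)).nodup_iff.mpr hn)
            ·
              have H2 := H b e d a o20 o19 o13
              rw [hsym b a, hsym e d, hsym e a, hsym d a] at H2
              exact fun hn => H2 (((( by decide : List.Perm ([4,3,0,5,2,1] : List (Fin 6)) [0,1,2,3,4,5]) ).map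
                (![K13c a b, K13c a d, K13c a e, K13c b d, K13c b e, K13c d e] : Fin 6 → Fin 6)).nodup_iff.mpr hn)
          ·
            have H2 := H b d e a o14 o19 o18
            rw [hsym b a, hsym d a, hsym e a] at H2
            exact fun hn => H2 (((( by decide : List.Perm ([3,4,0,5,1,2] : List (Fin 6)) [0,1,2,3,4,5]) ).map
              (![K13c a b, K13c a d, K13c a e, K13c b d, K13c b e, K13c d e] : Fin 6 → Fin 6)).nodup_iff.mpr hn)
        ·
          have H2 := H b d a e o14 o13 o18
          rw [hsym b a, hsym d a] at H2
          exact fun hn => H2 (((( by decide : List.Perm ([3,0,4,1,5,2] : List (Fin 6)) [0,1,2,3,4,5]) ).map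
            (![K13c a b, K13c a d, K13c a e, K13c b d, K13c b e, K13c d e] : Fin 6 → Fin 6)).nodup_iff.mpr hn)
    ·
      rcases lt_or_gt_of_ne hde.symm with o21 | o21
      ·
        rcases lt_or_gt_of_ne hae.symm with o22 | o22
        ·
          rcases lt_or_gt_of_ne hbe.symm with o23 | o23
          ·
            have H2 := H e b a d o23 o1 o13
            rw [hsym e b, hsym e a, hsym e d, hsym b a] at H2
            exact fun hn => H2 (((( by decide : List.Perm ([4,2,5,0,3,1] : List (Fin 6)) [0,1,2,3,4,5]) ).map
              (![K13c a b, K13c a d, K13c a e, K13c b d, K13c b e, K13c d e] : Fin 6 → Fin 6)).nodup_iff.mpr hn)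
          ·
            have H2 := H b e a d o23 o22 o13
            rw [hsym b a, hsym e a, hsym e d] at H2
            exact fun hn => H2 (((( by decide : List.Perm ([4,0,3,2,5,1] : List (Fin 6)) [0,1,2,3,4,5]) ).map
              (![K13c a b, K13c a d, K13c a e, K13c b d, K13c b e, K13c d e] : Fin 6 → Fin 6)).nodup_iff.mpr hn)
        ·
          have H2 := H b a e d o1 o22 o21
          rw [hsym b a, hsym e d] at H2
          exact fun hn => H2 (((( by decide : List.Perm ([0,4,3,2,1,5] : List (Fin 6)) [0,1,2,3,4,5]) ).map
            (![K13c a b, K13c a d, K13c a e, K13c b d, K13c b e, K13c d e] : Fin 6 → Fin 6)).nodup_iff.mpr hn)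
      ·
        have H2 := H b a d e o1 o13 o21
        rw [hsym b a] at H2
        exact fun hn => H2 (((( by decide : List.Perm ([0,3,4,1,2,5] : List (Fin 6)) [0,1,2,3,4,5]) ).map
          (![K13c a b, K13c a d, K13c a e, K13c b d, K13c b e, K13c d e] : Fin 6 → Fin 6)).nodup_iff.mpr hn)

/-- There is a 6-coloring of the edges of K₁₃ such that every vertex is incident to
exactly 2 edges of each color, and no 4 vertices span six distinctly colored edges. -/
theorem exists_balanced_6coloring_K13_no_rainbow_K4 :
    ∃ c : Fin 13 → Fin 13 → Fin 6,
      (∀ i j, c i j = c j i) ∧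
      (∀ v : Fin 13, ∀ col : Fin 6,
        (Finset.univ.filter (fun j => j ≠ v ∧ c v j = col)).card = 2) ∧
      (∀ a b d e : Fin 13, a ≠ b → a ≠ d → a ≠ e → b ≠ d → b ≠ e → d ≠ e →
        ¬ ([c a b, c a d, c a e, c b d, c b e, c d e] : List (Fin 6)).Nodup) := by
  exact ⟨K13c, K13c_symm, K13c_balanced, K13c_no_rainbow⟩
end

section
/- The explicit edge-coloring of K_13 given by the symmetric matrix M (rows: [0,2,5,4,1,3,3,6,4,2,6,5,1], [2,0,3,6,5,6,4,1,3,1,4,5,2], [5,3,0,5,4,2,6,3,1,6,2,1,4], [4,6,5,0,2,4,5,2,1,3,3,1,6], [1,5,4,2,0,3,1,6,2,5,4,6,3], [3,6,2,4,3,0,1,4,5,6,5,2,1], [3,4,6,5,1,1,0,2,5,4,2,6,3], [6,1,3,2,6,4,2,0,3,5,1,4,5], [4,3,1,1,2,5,5,3,0,4,6,2,6], [2,1,6,3,5,6,4,5,4,0,1,3,2], [6,4,2,3,4,5,2,1,6,1,0,3,5], [5,5,1,1,6,2,6,4,2,3,3,0,4], [1,2,4,6,3,1,3,5,6,2,5,4,0])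 contains no rainbow K_4: for every 4-element subset {a,b,c,d} of the 13 vertices, the six values M[a][b], M[a][c], M[a][d], M[b][c], M[b][d], M[c][d] are not pairwise distinct. -/
def M : Fin 13 → Fin 13 → ℕ :=
  ![![0,2,5,4,1,3,3,6,4,2,6,5,1],
    ![2,0,3,6,5,6,4,1,3,1,4,5,2],
    ![5,3,0,5,4,2,6,3,1,6,2,1,4],
    ![4,6,5,0,2,4,5,2,1,3,3,1,6],
    ![1,5,4,2,0,3,1,6,2,5,4,6,3],
    ![3,6,2,4,3,0,1,4,5,6,5,2,1],
    ![3,4,6,5,1,1,0,2,5,4,2,6,3],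
    ![6,1,3,2,6,4,2,0,3,5,1,4,5],
    ![4,3,1,1,2,5,5,3,0,4,6,2,6],
    ![2,1,6,3,5,6,4,5,4,0,1,3,2],
    ![6,4,2,3,4,5,2,1,6,1,0,3,5],
    ![5,5,1,1,6,2,6,4,2,3,3,0,4],
    ![1,2,4,6,3,1,3,5,6,2,5,4,0]]

set_option maxHeartbeats 8000000 in
/-- The explicit coloring of K₁₃ given by M contains no rainbow K₄. -/
theorem M_no_rainbow_K4 :
    ∀ a b c d : Fin 13, a ≠ b → a ≠ c → a ≠ d → b ≠ c → b ≠ d → c ≠ d →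
      ¬ ([M a b, M a c, M a d, M b c, M b d, M c d] : List ℕ).Nodup := by
  decide
end

section
/- If there exists a balanced edge-coloring of K_n with ℓ colors containing no rainbow K_q, then there exists a balanced edge-coloring of K_{n^2} with ℓ colors containing no rainbow K_q. -/
/-- An edge-coloring (given as a symmetric function) is balanced if every vertex is
incident to each color the same number of times. -/
def IsBalanced {n ℓ : ℕ} (c : Fin n → Fin n → Fin ℓ) : Prop :=
  (∀ i j, c i j = c j i) ∧
  ∃ t : ℕ, ∀ v : Fin n, ∀ col : Fin ℓ,
    (Finset.univ.filter (fun j => j ≠ v ∧ c v j = col)).card = t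

/-- The set `s` is rainbow for the coloring `c`: distinct edges inside `s` get
distinct colors. -/
def IsRainbowOn {V : Type*} [DecidableEq V] {ℓ : ℕ} (c : V → V → Fin ℓ)
    (s : Finset V) : Prop :=
  ∀ a ∈ s, ∀ b ∈ s, ∀ a' ∈ s, ∀ b' ∈ s,
    a ≠ b → a' ≠ b' → ({a, b} : Finset V) ≠ {a', b'} → c a b ≠ c a' b'

/-- The coloring `c` contains a rainbow copy of K_q. -/
def HasRainbowClique {V : Type*} [DecidableEq V] {ℓ : ℕ} (c : V → V → Fin ℓ)
    (q : ℕ) : Prop :=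
  ∃ s : Finset V, s.card = q ∧ IsRainbowOn c s

private lemma pair_image {α β : Type*} [DecidableEq α] [DecidableEq β] (g : α → β)
    (x y : α) : ({g x, g y} : Finset β) = Finset.image g {x, y} := by
  simp [Finset.image_insert]

/-- If K_n has a balanced ℓ-coloring with no rainbow K_q, then so does K_{n²}. -/
theorem balanced_no_rainbow_square (n ℓ q : ℕ)
    (h : ∃ c : Fin n → Fin n → Fin ℓ, IsBalanced c ∧ ¬ HasRainbowClique c q) :
    ∃ c : Fin (n ^ 2) → Fin (n ^ 2) → Fin ℓ,
      IsBalanced c ∧ ¬ HasRainbowClique c q := by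
  obtain ⟨c, ⟨hsym, t, hbal⟩, hno⟩ := h
  let e : Fin (n ^ 2) ≃ Fin n × Fin n := (finCongr (pow_two n)).trans finProdFinEquiv.symm
  set D : Fin n × Fin n → Fin n × Fin n → Fin ℓ :=
    fun p r => if p.1 = r.1 then c p.2 r.2 else c p.1 r.1 with hD
  refine ⟨fun x y => D (e x) (e y), ⟨?_, t + n * t, ?_⟩, ?_⟩
  · -- symmetry
    intro x y
    rcases eq_or_ne (e x).1 (e y).1 with h1 | h1
    · simp only [hD, if_pos h1, if_pos h1.symm, hsym]
    · simp only [hD, if_neg h1, if_neg (Ne.symm h1), hsym]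
  · -- balance
    intro v col
    have h1 : (Finset.univ.filter (fun y : Fin (n ^ 2) => y ≠ v ∧ D (e v) (e y) = col)).card
        = (Finset.univ.filter (fun p : Fin n × Fin n => p ≠ e v ∧ D (e v) p = col)).card := by
      apply Finset.card_equiv e
      intro y
      simp [Ne, e.injective.eq_iff]
    rw [h1]
    obtain ⟨u, i, hev⟩ : ∃ u i, e v = (u, i) := ⟨(e v).1, (e v).2, rfl⟩
    have key : ∀ p : Fin n × Fin n, (p ≠ e v ∧ D (e v) p = col) ↔
        ((p.1 = u ∧ p.2 ≠ i ∧ c i p.2 = col) ∨ (p.1 ≠ u ∧ c u p.1 = col)) := by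
      rintro ⟨x, j⟩
      simp only [hev, hD, Prod.mk.injEq, ne_eq]
      by_cases hx : u = x
      · subst hx
        simp
      · simp [hx, Ne.symm hx]
    rw [Finset.filter_congr (fun p _ => key p), Finset.filter_or]
    have hdisj : Disjoint
        (Finset.univ.filter (fun p : Fin n × Fin n => p.1 = u ∧ p.2 ≠ i ∧ c i p.2 = col))
        (Finset.univ.filter (fun p : Fin n × Fin n => p.1 ≠ u ∧ c u p.1 = col)) := by
      rw [Finset.disjoint_left]
      intro p hp1 hp2
      simp only [Finset.mem_filter] at hp1 hp2
      exact hp2.2.1 hp1.2.1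
    rw [Finset.card_union_of_disjoint hdisj]
    have hA : (Finset.univ.filter
        (fun p : Fin n × Fin n => p.1 = u ∧ p.2 ≠ i ∧ c i p.2 = col)).card = t := by
      rw [← hbal i col]
      refine Finset.card_bij' (fun p _ => p.2) (fun j _ => (u, j)) ?_ ?_ ?_ ?_
      · intro p hp
        simp only [Finset.mem_filter, Finset.mem_univ, true_and] at hp ⊢
        exact hp.2
      · intro j hj
        simp only [Finset.mem_filter, Finset.mem_univ, true_and] at hj ⊢
        tauto
      · intro p hp
        simp only [Finset.mem_filter] at hp
        exact Prod.ext hp.2.1.symm rfl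
      · intro j _
        rfl
    have hB : (Finset.univ.filter
        (fun p : Fin n × Fin n => p.1 ≠ u ∧ c u p.1 = col)).card = n * t := by
      have heq : (Finset.univ.filter (fun p : Fin n × Fin n => p.1 ≠ u ∧ c u p.1 = col))
          = (Finset.univ.filter (fun w => w ≠ u ∧ c u w = col)) ×ˢ Finset.univ := by
        ext p
        simp [Finset.mem_product]
      rw [heq, Finset.card_product, hbal u col, Finset.card_univ, Fintype.card_fin,
        Nat.mul_comm]
    rw [hA, hB]
  · -- no rainbow clique
    rintro ⟨s, hcard, hrb⟩
    by_cases hcase : ∀ x ∈ s, ∀ y ∈ s, (e x).1 = (e y).1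
    · -- all in one copy: project to second coordinate
      refine hno ⟨s.image (fun z => (e z).2), ?_, ?_⟩
      · rw [Finset.card_image_of_injOn, hcard]
        intro x hx y hy hxy
        exact e.injective (Prod.ext (hcase x hx y hy) hxy)
      · intro a ha b hb a' ha' b' hb' hab ha'b' hne
        obtain ⟨x, hx, rfl⟩ := Finset.mem_image.mp ha
        obtain ⟨y, hy, rfl⟩ := Finset.mem_image.mp hb
        obtain ⟨x', hx', rfl⟩ := Finset.mem_image.mp ha'
        obtain ⟨y', hy', rfl⟩ := Finset.mem_image.mp hb'
        have hxy : x ≠ y := fun hh => hab (by rw [hh])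
        have hx'y' : x' ≠ y' := fun hh => ha'b' (by rw [hh])
        have hpairs : ({x, y} : Finset _) ≠ {x', y'} := by
          intro hp
          refine hne ?_
          rw [pair_image (fun z => (e z).2) x y, pair_image (fun z => (e z).2) x' y', hp]
        intro hcc
        refine hrb x hx y hy x' hx' y' hy' hxy hx'y' hpairs ?_
        simp only [hD, if_pos (hcase x hx y hy), if_pos (hcase x' hx' y' hy')]
        exact hcc
    · push_neg at hcase
      obtain ⟨x0, hx0, y0, hy0, hx0y0⟩ := hcase
      have hinj : Set.InjOn (fun z => (e z).1) s := by
        intro x hx y hy hgxy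
        have hgxy' : (e x).1 = (e y).1 := hgxy
        by_contra hxy
        obtain ⟨z, hz, hgz⟩ : ∃ z ∈ s, (e z).1 ≠ (e x).1 := by
          by_cases h' : (e x).1 = (e x0).1
          · exact ⟨y0, hy0, fun hh => hx0y0 (h'.symm.trans hh.symm)⟩
          · exact ⟨x0, hx0, fun hh => h' hh.symm⟩
        have hxz : x ≠ z := fun hh => hgz (by rw [hh])
        have hyz : y ≠ z := fun hh => hgz (by rw [← hh]; exact hgxy'.symm)
        have hpairs : ({x, z} : Finset _) ≠ {y, z} := by
          intro hp
          have hmem : x ∈ ({y, z} : Finset _) := hp ▸ Finset.mem_insert_self x {z}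
          rcases Finset.mem_insert.mp hmem with h1 | h1
          · exact hxy h1
          · exact hxz (Finset.mem_singleton.mp h1)
        refine hrb x hx z hz y hy z hz hxz hyz hpairs ?_
        simp only [hD, if_neg (fun hh : (e x).1 = (e z).1 => hgz hh.symm),
          if_neg (fun hh : (e y).1 = (e z).1 => hgz (hh.symm.trans hgxy'.symm))]
        exact congrArg (fun w => c w (e z).1) hgxy'
      refine hno ⟨s.image (fun z => (e z).1), ?_, ?_⟩
      · rw [Finset.card_image_of_injOn hinj, hcard]
      · intro a ha b hb a' ha' b' hb' hab ha'b' hne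
        obtain ⟨x, hx, rfl⟩ := Finset.mem_image.mp ha
        obtain ⟨y, hy, rfl⟩ := Finset.mem_image.mp hb
        obtain ⟨x', hx', rfl⟩ := Finset.mem_image.mp ha'
        obtain ⟨y', hy', rfl⟩ := Finset.mem_image.mp hb'
        have hxy : x ≠ y := fun hh => hab (by rw [hh])
        have hx'y' : x' ≠ y' := fun hh => ha'b' (by rw [hh])
        have hpairs : ({x, y} : Finset _) ≠ {x', y'} := by
          intro hp
          refine hne ?_
          rw [pair_image (fun z => (e z).1) x y, pair_image (fun z => (e z).1) x' y', hp]
        intro hcc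
        refine hrb x hx y hy x' hx' y' hy' hxy hx'y' hpairs ?_
        simp only [hD, if_neg hab, if_neg ha'b']
        exact hcc
end

section
/- If there exists a balanced edge-coloring of K_n with ℓ colors and no rainbow K_q, then for every positive integer k there exists a balanced edge-coloring of K_{n^k} with ℓ colors and no rainbow K_q. -/
open Finset

/-- The product (blow-up) coloring. -/
def prodColor {m m' ℓ : ℕ} (c : Fin m → Fin m → Fin ℓ) (c' : Fin m' → Fin m' → Fin ℓ)
    (p r : Fin m × Fin m') : Fin ℓ :=
  if p.1 = r.1 then c' p.2 r.2 else c p.1 r.1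

lemma card_filter_equiv {α β : Type*} [Fintype α] [Fintype β] [DecidableEq α] [DecidableEq β]
    (e : α ≃ β) (P : β → Prop) [DecidablePred P] :
    (univ.filter fun a => P (e a)).card = (univ.filter P).card := by
  rw [← Finset.card_map e.toEmbedding]
  congr 1
  ext b
  simp only [Finset.mem_map, Finset.mem_filter, Finset.mem_univ, true_and,
    Equiv.coe_toEmbedding]
  constructor
  · rintro ⟨a, h, rfl⟩; exact h
  · intro h; exact ⟨e.symm b, by simpa using h, by simp⟩

lemma hasRainbow_equiv {α β : Type*} [DecidableEq α] [DecidableEq β] {ℓ q : ℕ}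
    (e : α ≃ β) (c : β → β → Fin ℓ) :
    HasRainbowClique (fun u v => c (e u) (e v)) q → HasRainbowClique c q := by
  rintro ⟨s, hcard, hr⟩
  refine ⟨s.map e.toEmbedding, by simp [hcard], ?_⟩
  intro a ha b hb a' ha' b' hb' hab ha'b' hpair
  simp only [Finset.mem_map, Equiv.coe_toEmbedding] at ha hb ha' hb'
  obtain ⟨a₀, ha₀, rfl⟩ := ha
  obtain ⟨b₀, hb₀, rfl⟩ := hb
  obtain ⟨a₀', ha₀', rfl⟩ := ha'
  obtain ⟨b₀', hb₀', rfl⟩ := hb'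
  have h1 : a₀ ≠ b₀ := fun h => hab (by rw [h])
  have h2 : a₀' ≠ b₀' := fun h => ha'b' (by rw [h])
  have h3 : ({a₀, b₀} : Finset α) ≠ {a₀', b₀'} := by
    intro h
    apply hpair
    have := congrArg (Finset.image e) h
    simpa using this
  exact hr a₀ ha₀ b₀ hb₀ a₀' ha₀' b₀' hb₀' h1 h2 h3

lemma prod_count {m m' ℓ : ℕ} (c : Fin m → Fin m → Fin ℓ) (c' : Fin m' → Fin m' → Fin ℓ)
    {t t' : ℕ}
    (ht : ∀ v col, (univ.filter fun j => j ≠ v ∧ c v j = col).card = t)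
    (ht' : ∀ v col, (univ.filter fun j => j ≠ v ∧ c' v j = col).card = t')
    (ax : Fin m × Fin m') (col : Fin ℓ) :
    (univ.filter fun p : Fin m × Fin m' => p ≠ ax ∧ prodColor c c' ax p = col).card
      = t * m' + t' := by
  obtain ⟨a, x⟩ := ax
  have hset : (univ.filter fun p : Fin m × Fin m' => p ≠ (a, x) ∧ prodColor c c' (a, x) p = col)
      = (univ.filter fun b => b ≠ a ∧ c a b = col) ×ˢ (univ : Finset (Fin m'))
        ∪ ({a} : Finset (Fin m)) ×ˢ (univ.filter fun y => y ≠ x ∧ c' x y = col) := by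
    ext ⟨b, y⟩
    simp only [Finset.mem_filter, Finset.mem_univ, true_and, Finset.mem_union,
      Finset.mem_product, Finset.mem_singleton, prodColor, ne_eq, Prod.mk.injEq, not_and,
      and_true]
    by_cases hba : b = a
    · subst hba
      simp [eq_comm]
    · simp [hba, Ne.symm hba, fun h : a = b => hba h.symm]
  rw [hset, Finset.card_union_of_disjoint, Finset.card_product, Finset.card_product,
    ht a col, ht' x col]
  · simp
  · rw [Finset.disjoint_left]
    rintro ⟨b, y⟩ hmem hmem'
    simp only [Finset.mem_product, Finset.mem_filter, Finset.mem_singleton] at hmem hmem'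
    exact hmem.1.2.1 hmem'.1

lemma prod_no_rainbow {m m' ℓ q : ℕ} (c : Fin m → Fin m → Fin ℓ)
    (c' : Fin m' → Fin m' → Fin ℓ)
    (hr : ¬ HasRainbowClique c q) (hr' : ¬ HasRainbowClique c' q) :
    ¬ HasRainbowClique (prodColor c c') q := by
  rintro ⟨s, hcard, hrb⟩
  by_cases hall : ∀ u ∈ s, ∀ v ∈ s, (u : Fin m × Fin m').1 = v.1
  · -- all in one block: project to second coordinate
    apply hr'
    have hinj : Set.InjOn Prod.snd (s : Set (Fin m × Fin m')) := by
      intro u hu v hv h2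
      exact Prod.ext (hall u hu v hv) h2
    refine ⟨s.image Prod.snd, by rw [Finset.card_image_of_injOn hinj, hcard], ?_⟩
    intro x hx y hy x' hx' y' hy' hxy hx'y' hpair
    simp only [Finset.mem_image] at hx hy hx' hy'
    obtain ⟨u, hu, rfl⟩ := hx
    obtain ⟨v, hv, rfl⟩ := hy
    obtain ⟨u', hu', rfl⟩ := hx'
    obtain ⟨v', hv', rfl⟩ := hy'
    have huv : u ≠ v := fun h => hxy (by rw [h])
    have hu'v' : u' ≠ v' := fun h => hx'y' (by rw [h])
    have hpair2 : ({u, v} : Finset (Fin m × Fin m')) ≠ {u', v'} := by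
      intro h
      apply hpair
      have := congrArg (Finset.image Prod.snd) h
      simpa using this
    have e1 : prodColor c c' u v = c' u.2 v.2 := by
      simp [prodColor, hall u hu v hv]
    have e2 : prodColor c c' u' v' = c' u'.2 v'.2 := by
      simp [prodColor, hall u' hu' v' hv']
    rw [← e1, ← e2]
    exact hrb u hu v hv u' hu' v' hv' huv hu'v' hpair2
  · push_neg at hall
    obtain ⟨u₀, hu₀, v₀, hv₀, hne₀⟩ := hall
    -- first coordinates are injective on s
    have hinj : Set.InjOn Prod.fst (s : Set (Fin m × Fin m')) := by
      intro u hu v hv h1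
      by_contra huv
      -- find w with different first coordinate
      obtain ⟨w, hw, hw1⟩ : ∃ w ∈ s, (w : Fin m × Fin m').1 ≠ u.1 := by
        by_cases h : u₀.1 = u.1
        · exact ⟨v₀, hv₀, fun hh => hne₀ (h.trans hh.symm)⟩
        · exact ⟨u₀, hu₀, h⟩
      have huw : u ≠ w := fun h => hw1 (by rw [h])
      have hvw : v ≠ w := fun h => hw1 (by rw [← h, ← h1])
      have hpair : ({u, w} : Finset (Fin m × Fin m')) ≠ {v, w} := by
        intro h
        have : u ∈ ({v, w} : Finset (Fin m × Fin m')) := by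
          rw [← h]; simp
        simp only [Finset.mem_insert, Finset.mem_singleton] at this
        rcases this with h' | h'
        · exact huv h'
        · exact huw h'
      have hcol : prodColor c c' u w = prodColor c c' v w := by
        simp only [prodColor]
        rw [if_neg hw1.symm, if_neg (fun hh => hw1 (h1 ▸ hh).symm), h1]
      exact hrb u hu w hw v hv w hw huw hvw hpair hcol
    apply hr
    refine ⟨s.image Prod.fst, by rw [Finset.card_image_of_injOn hinj, hcard], ?_⟩
    intro x hx y hy x' hx' y' hy' hxy hx'y' hpair
    simp only [Finset.mem_image] at hx hy hx' hy'
    obtain ⟨u, hu, rfl⟩ := hx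
    obtain ⟨v, hv, rfl⟩ := hy
    obtain ⟨u', hu', rfl⟩ := hx'
    obtain ⟨v', hv', rfl⟩ := hy'
    have huv : u ≠ v := fun h => hxy (by rw [h])
    have hu'v' : u' ≠ v' := fun h => hx'y' (by rw [h])
    have hpair2 : ({u, v} : Finset (Fin m × Fin m')) ≠ {u', v'} := by
      intro h
      apply hpair
      have := congrArg (Finset.image Prod.fst) h
      simpa using this
    have e1 : prodColor c c' u v = c u.1 v.1 := by
      simp [prodColor, hxy]
    have e2 : prodColor c c' u' v' = c u'.1 v'.1 := by
      simp [prodColor, hx'y']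
    rw [← e1, ← e2]
    exact hrb u hu v hv u' hu' v' hv' huv hu'v' hpair2

/-- Combine good colorings on `Fin m` and `Fin m'` into one on `Fin (m * m')`. -/
lemma combine {m m' ℓ q : ℕ} (c : Fin m → Fin m → Fin ℓ) (c' : Fin m' → Fin m' → Fin ℓ)
    (hb : IsBalanced c) (hb' : IsBalanced c')
    (hr : ¬ HasRainbowClique c q) (hr' : ¬ HasRainbowClique c' q) :
    ∃ d : Fin (m * m') → Fin (m * m') → Fin ℓ,
      IsBalanced d ∧ ¬ HasRainbowClique d q := by
  obtain ⟨hs, t, ht⟩ := hb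
  obtain ⟨hs', t', ht'⟩ := hb'
  let e : Fin (m * m') ≃ Fin m × Fin m' := finProdFinEquiv.symm
  refine ⟨fun u v => prodColor c c' (e u) (e v), ⟨?_, ⟨t * m' + t', ?_⟩⟩, ?_⟩
  · intro i j
    simp only [prodColor]
    by_cases h : (e i).1 = (e j).1
    · rw [if_pos h, if_pos h.symm, hs']
    · rw [if_neg h, if_neg (fun hh => h hh.symm), hs]
  · intro v col
    show (univ.filter fun j => j ≠ v ∧ prodColor c c' (e v) (e j) = col).card = t * m' + t'
    have heq : (univ.filter fun j => j ≠ v ∧ prodColor c c' (e v) (e j) = col)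
        = univ.filter fun j => (fun p => p ≠ e v ∧ prodColor c c' (e v) p = col) (e j) := by
      apply Finset.filter_congr
      intro j _
      simp [e.injective.ne_iff]
    rw [heq, card_filter_equiv e (fun p => p ≠ e v ∧ prodColor c c' (e v) p = col),
      prod_count c c' ht ht' (e v) col]
  · intro hR
    exact prod_no_rainbow c c' hr hr' (hasRainbow_equiv e (prodColor c c') hR)

lemma transport {M N ℓ q : ℕ} (e : Fin M ≃ Fin N) (c : Fin N → Fin N → Fin ℓ)
    (hb : IsBalanced c) (hr : ¬ HasRainbowClique c q) :
    ∃ d : Fin M → Fin M → Fin ℓ, IsBalanced d ∧ ¬ HasRainbowClique d q := by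
  obtain ⟨hs, t, ht⟩ := hb
  refine ⟨fun u v => c (e u) (e v), ⟨fun i j => hs _ _, ⟨t, ?_⟩⟩, ?_⟩
  · intro v col
    show (univ.filter fun j => j ≠ v ∧ c (e v) (e j) = col).card = t
    have heq : (univ.filter fun j => j ≠ v ∧ c (e v) (e j) = col)
        = univ.filter fun j => (fun w => w ≠ e v ∧ c (e v) w = col) (e j) := by
      apply Finset.filter_congr
      intro j _
      simp [e.injective.ne_iff]
    rw [heq, card_filter_equiv e (fun w => w ≠ e v ∧ c (e v) w = col), ht]
  · intro hR
    exact hr (hasRainbow_equiv e c hR)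

/-- If K_n has a balanced ℓ-coloring with no rainbow K_q, then so does K_{n^k}
for every k ≥ 1. -/
theorem balanced_no_rainbow_pow (n ℓ q : ℕ)
    (h : ∃ c : Fin n → Fin n → Fin ℓ, IsBalanced c ∧ ¬ HasRainbowClique c q) :
    ∀ k : ℕ, 0 < k →
      ∃ c : Fin (n ^ k) → Fin (n ^ k) → Fin ℓ,
        IsBalanced c ∧ ¬ HasRainbowClique c q := by
  obtain ⟨c, hb, hr⟩ := h
  intro k hk
  induction k, hk using Nat.le_induction with
  | base =>
    exact transport (finCongr (pow_one n)) c hb hr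
  | succ k hk ih =>
    obtain ⟨d, hdb, hdr⟩ := ih
    obtain ⟨d', hdb', hdr'⟩ := combine d c hdb hb hdr hr
    exact transport (finCongr (pow_succ n k)) d' hdb' hdr'
end

section
/- Any copy of K_4 in the lexicographic product coloring of K_{n·n} (as defined from a coloring χ of K_n with no rainbow K_4) whose four vertices do not all lie in distinct copies and do not all lie in a single copy contains two edges of the same color; consequently the product coloring has no rainbow K_4. -/
/-- The lexicographic product coloring of K_{n·n} built from χ. -/
def lexColoring {n ℓ : ℕ} (χ : Fin n → Fin n → Fin ℓ) :
    Fin n × Fin n → Fin n × Fin n → Fin ℓ :=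
  fun u w => if u.1 = w.1 then χ u.2 w.2 else χ u.1 w.1

/-- Any 4-set of the product neither contained in one copy nor spread over four
distinct copies has a repeated edge color; consequently, if χ has no rainbow K₄
then neither does the product coloring. -/
theorem lex_coloring_no_rainbow_K4 (n ℓ : ℕ) (χ : Fin n → Fin n → Fin ℓ)
    (hχ : ¬ HasRainbowClique χ 4) :
    (∀ s : Finset (Fin n × Fin n), s.card = 4 →
      (∃ u ∈ s, ∃ w ∈ s, u ≠ w ∧ u.1 = w.1) →
      (∃ u ∈ s, ∃ w ∈ s, u.1 ≠ w.1) →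
      ¬ IsRainbowOn (lexColoring χ) s) ∧
    ¬ HasRainbowClique (lexColoring χ) 4 := by
  have part1 : ∀ s : Finset (Fin n × Fin n), s.card = 4 →
      (∃ u ∈ s, ∃ w ∈ s, u ≠ w ∧ u.1 = w.1) →
      (∃ u ∈ s, ∃ w ∈ s, u.1 ≠ w.1) →
      ¬ IsRainbowOn (lexColoring χ) s := by
    rintro s hs ⟨u, hu, w, hw, huw, hfst⟩ ⟨p, hp, q, hq, hpq⟩ hR
    obtain ⟨y, hy, hyfst⟩ : ∃ y ∈ s, y.1 ≠ u.1 := by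
      by_cases h : p.1 = u.1
      · refine ⟨q, hq, fun e => hpq ?_⟩
        rw [h, e]
      · exact ⟨p, hp, h⟩
    have h1 : lexColoring χ u y = χ u.1 y.1 := by
      have : u.1 ≠ y.1 := fun e => hyfst e.symm
      simp [lexColoring, this]
    have h2 : lexColoring χ w y = χ u.1 y.1 := by
      have : w.1 ≠ y.1 := by rw [← hfst]; exact fun e => hyfst e.symm
      unfold lexColoring
      rw [if_neg this, hfst]
    have huy : u ≠ y := fun e => hyfst (congrArg Prod.fst e.symm)
    have hwy : w ≠ y := fun e => hyfst (by rw [← e, ← hfst])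
    have hpair : ({u, y} : Finset (Fin n × Fin n)) ≠ {w, y} := by
      intro h
      have hmem : u ∈ ({w, y} : Finset (Fin n × Fin n)) := by
        rw [← h]; exact Finset.mem_insert_self _ _
      rcases Finset.mem_insert.mp hmem with h' | h'
      · exact huw h'
      · exact huy (Finset.mem_singleton.mp h')
    exact hR u hu y hy w hw y hy huy hwy hpair (h1.trans h2.symm)
  refine ⟨part1, ?_⟩
  rintro ⟨s, hs, hR⟩
  by_cases hsame : ∃ u ∈ s, ∃ w ∈ s, u ≠ w ∧ u.1 = w.1
  · by_cases hdiff : ∃ u ∈ s, ∃ w ∈ s, u.1 ≠ w.1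
    · exact part1 s hs hsame hdiff hR
    · push_neg at hdiff
      apply hχ
      refine ⟨s.image Prod.snd, ?_, ?_⟩
      · rw [Finset.card_image_of_injOn, hs]
        intro u hu w hw hsnd
        exact Prod.ext (hdiff u hu w hw) hsnd
      · rintro a ha b hb a' ha' b' hb' hab ha'b' hne
        simp only [Finset.mem_image] at ha hb ha' hb'
        obtain ⟨u, hu, rfl⟩ := ha
        obtain ⟨w, hw, rfl⟩ := hb
        obtain ⟨u', hu', rfl⟩ := ha'
        obtain ⟨w', hw', rfl⟩ := hb'
        have huw : u ≠ w := fun e => hab (congrArg Prod.snd e)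
        have hu'w' : u' ≠ w' := fun e => ha'b' (congrArg Prod.snd e)
        have h1 : lexColoring χ u w = χ u.2 w.2 := by
          simp [lexColoring, hdiff u hu w hw]
        have h2 : lexColoring χ u' w' = χ u'.2 w'.2 := by
          simp [lexColoring, hdiff u' hu' w' hw']
        have key := hR u hu w hw u' hu' w' hw' huw hu'w' ?_
        · rw [h1, h2] at key; exact key
        · intro h
          apply hne
          have := congrArg (Finset.image Prod.snd) h
          simpa using this
  · push_neg at hsame
    apply hχ
    refine ⟨s.image Prod.fst, ?_, ?_⟩
    · rw [Finset.card_image_of_injOn, hs]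
      intro u hu w hw hfst
      by_contra h
      exact hsame u hu w hw h hfst
    · rintro a ha b hb a' ha' b' hb' hab ha'b' hne
      simp only [Finset.mem_image] at ha hb ha' hb'
      obtain ⟨u, hu, rfl⟩ := ha
      obtain ⟨w, hw, rfl⟩ := hb
      obtain ⟨u', hu', rfl⟩ := ha'
      obtain ⟨w', hw', rfl⟩ := hb'
      have huw : u ≠ w := fun e => hab (congrArg Prod.fst e)
      have hu'w' : u' ≠ w' := fun e => ha'b' (congrArg Prod.fst e)
      have h1 : lexColoring χ u w = χ u.1 w.1 := by
        simp [lexColoring, hab]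
      have h2 : lexColoring χ u' w' = χ u'.1 w'.1 := by
        simp [lexColoring, ha'b']
      have key := hR u hu w hw u' hu' w' hw' huw hu'w' ?_
      · rw [h1, h2] at key; exact key
      · intro h
        apply hne
        have := congrArg (Finset.image Prod.fst) h
        simpa using this
end
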